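/- (Lemma comparing θ with the boundary points c_2 and c_4.) Fix an integer n ≥ 1, σ > 0, α, τ ∈ (0,1) with τ ≥ α and τ < 2Φ(−z_{α/2}/2) − α, and λ > 0 with √λ > z_{α/2}σ/√n. Let c_2 be a solution of θ = √λ + z_{α/2}σ̃(θ)/√n and c_4 a solution of θ = √λ + z_{α/2}σ/√n + z_{α/2}σ̃(θ)/√n. Then for every θ ∈ (√λ + (1/2)z_{α/2}σ/√n, √λ + 2z_{α/2}σ/√n): θ > c_2 if and only if θ > √λ + z_{α/2}σ̃(θ)/√n; and θ > c_4 if and only if θ > √λ + z_{α/2}σ/√n + z_{α/2}σ̃(θ)/√n. -/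
import Mathlib


open MeasureTheory ProbabilityTheory

/-- The standard normal cumulative distribution function. -/
noncomputable def Phi (x : ℝ) : ℝ := (gaussianReal 0 1 (Set.Iic x)).toReal

/-- P_s(θ,ν) = Φ(√n(θ − ν)/σ) + Φ(√n(−θ − ν)/σ). -/
noncomputable def Ps (n : ℕ) (σ θ ν : ℝ) : ℝ :=
  Phi (Real.sqrt n * (θ - ν) / σ) + Phi (Real.sqrt n * (-θ - ν) / σ)

/-- σ̃(θ) = (1 + λ/θ²)⁻¹ σ for θ ≠ 0, with the convention σ̃(0) = 0. -/
noncomputable def sigTilde (lam σ θ : ℝ) : ℝ :=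
  if θ = 0 then 0 else (1 + lam / θ ^ 2)⁻¹ * σ

open Classical in
/-- The piecewise function CR_a(θ,ν); here `za` denotes the quantile z_{α/2}. -/
noncomputable def CRa (n : ℕ) (σ lam za θ ν : ℝ) : ℝ :=
  if θ < |ν - za * sigTilde lam σ θ / Real.sqrt n| then
    (Ps n σ θ ν - 2 * Phi (-(za * sigTilde lam σ θ / σ))) *
      (if ν < za * sigTilde lam σ θ / Real.sqrt n then 1 else 0)
  else if θ ≤ ν + za * sigTilde lam σ θ / Real.sqrt n then
    Phi (za * sigTilde lam σ θ / σ) - Phi (Real.sqrt n * (ν - θ) / σ)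
  else 1 - 2 * Phi (-(za * sigTilde lam σ θ / σ))

open Classical in
/-- The piecewise function CR_b(θ,ν); here `za` denotes the quantile z_{α/2}. -/
noncomputable def CRb (n : ℕ) (σ α za θ ν : ℝ) : ℝ :=
  if θ < |ν - za * σ / Real.sqrt n| then
    (Ps n σ θ ν - α) * (if ν < za * σ / Real.sqrt n then 1 else 0)
  else if θ ≤ ν + za * σ / Real.sqrt n then
    1 - α / 2 - Phi (Real.sqrt n * (ν - θ) / σ)
  else 1 - α


section AuxCompare

lemma Phi_mono' : Monotone Phi := by
  intro a b hab
  have := measure_mono (μ := gaussianReal 0 1) (Set.Iic_subset_Iic.2 hab)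
  exact ENNReal.toReal_mono (measure_ne_top _ _) this

lemma Phi_zero' : Phi 0 = 1 / 2 := by
  have hmap : (gaussianReal 0 1).map (fun x => (-1 : ℝ) * x) = gaussianReal 0 1 := by
    rw [gaussianReal_map_const_mul (-1)]
    norm_num
  have h1 : gaussianReal 0 1 (Set.Iic 0) = gaussianReal 0 1 (Set.Ici 0) := by
    conv_lhs => rw [← hmap]
    rw [Measure.map_apply (by fun_prop) measurableSet_Iic]
    congr 1
    ext x
    simp [neg_le, le_neg]
  have h0 : gaussianReal 0 1 {(0:ℝ)} = 0 := by
    refine gaussianReal_absolutelyContinuous 0 (v := 1) one_ne_zero ?_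
    simp
  have h2 : gaussianReal 0 1 (Set.Iic 0) + gaussianReal 0 1 (Set.Ioi 0) = 1 := by
    rw [← measure_union (by simp [Set.disjoint_left]) measurableSet_Ioi]
    simp [Set.Iic_union_Ioi]
  have h3 : gaussianReal 0 1 (Set.Ici 0) = gaussianReal 0 1 (Set.Ioi 0) := by
    have : Set.Ici (0:ℝ) = {0} ∪ Set.Ioi 0 := by
      ext x; simp [le_iff_lt_or_eq, or_comm, eq_comm]
    rw [this, measure_union (by simp) measurableSet_Ioi, h0, zero_add]
  rw [h1, h3] at h2
  have h4 : gaussianReal 0 1 (Set.Ioi 0) = 1/2 := by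
    rw [← two_mul] at h2
    exact (ENNReal.eq_div_iff (two_ne_zero) (ENNReal.ofNat_ne_top)).mpr h2
  rw [Phi, h1, h3, h4]
  simp [ENNReal.toReal_div]

lemma sigTilde_eq' {lam σ θ : ℝ} (hlam : 0 < lam) (hθ : θ ≠ 0) :
    sigTilde lam σ θ = θ ^ 2 / (θ ^ 2 + lam) * σ := by
  have h1 : θ ^ 2 > 0 := by positivity
  rw [sigTilde, if_neg hθ]
  rw [show (1 + lam / θ ^ 2) = (θ ^ 2 + lam) / θ ^ 2 by field_simp]
  rw [inv_div]

lemma sigTilde_nonneg' {lam σ θ : ℝ} (hσ : 0 ≤ σ) (hlam : 0 < lam) : 0 ≤ sigTilde lam σ θ := by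
  rcases eq_or_ne θ 0 with h | h
  · simp [sigTilde, h]
  · rw [sigTilde_eq' hlam h]
    have : θ ^ 2 > 0 := by positivity
    positivity

lemma sigTilde_diff_lt {lam σ za s θ₁ θ₂ : ℝ} (hσ : 0 < σ) (hlam : 0 < lam) (hza : 0 < za)
    (hs : 0 < s) (hLB : za * σ / s < Real.sqrt lam)
    (h1 : Real.sqrt lam ≤ θ₁) (h12 : θ₁ < θ₂) :
    za * sigTilde lam σ θ₂ / s - za * sigTilde lam σ θ₁ / s < θ₂ - θ₁ := by
  set L := Real.sqrt lam with hLdef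
  have hL : 0 < L := Real.sqrt_pos.2 hlam
  have hL2 : L ^ 2 = lam := Real.sq_sqrt hlam.le
  have hθ1 : 0 < θ₁ := lt_of_lt_of_le hL h1
  have hθ2 : 0 < θ₂ := hθ1.trans h12
  have h2 : L ≤ θ₂ := h1.trans h12.le
  rw [sigTilde_eq' hlam hθ1.ne', sigTilde_eq' hlam hθ2.ne', ← hL2]
  have hd1 : (0:ℝ) < θ₁ ^ 2 + L ^ 2 := by positivity
  have hd2 : (0:ℝ) < θ₂ ^ 2 + L ^ 2 := by positivity
  set A := za * σ / s with hAdef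
  have hA : 0 < A := by positivity
  have hAL : A < L := hLB
  have key : za * (θ₂ ^ 2 / (θ₂ ^ 2 + L ^ 2) * σ) / s - za * (θ₁ ^ 2 / (θ₁ ^ 2 + L ^ 2) * σ) / s
      = A * (L ^ 2 * (θ₂ ^ 2 - θ₁ ^ 2)) / ((θ₂ ^ 2 + L ^ 2) * (θ₁ ^ 2 + L ^ 2)) := by
    rw [hAdef]; field_simp; ring
  rw [key, div_lt_iff₀ (by positivity)]
  have e1 : 2 * L * θ₁ ≤ θ₁ ^ 2 + L ^ 2 := by nlinarith [sq_nonneg (θ₁ - L)]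
  have e2 : 2 * L * θ₂ ≤ θ₂ ^ 2 + L ^ 2 := by nlinarith [sq_nonneg (θ₂ - L)]
  have e3 : L * (θ₁ + θ₂) ≤ 2 * (θ₁ * θ₂) := by
    nlinarith [mul_nonneg (sub_nonneg.2 h1) hθ2.le, mul_nonneg hθ1.le (sub_nonneg.2 h2)]
  have e4 : 2 * L ^ 3 * (θ₁ + θ₂) ≤ (θ₂ ^ 2 + L ^ 2) * (θ₁ ^ 2 + L ^ 2) := by
    nlinarith [mul_le_mul e1 e2 (by positivity) hd1.le]
  nlinarith [mul_pos (sub_pos.2 h12) (by positivity : (0:ℝ) < θ₁ + θ₂),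
    mul_pos (mul_pos hL hL) (mul_pos (sub_pos.2 h12) (by positivity : (0:ℝ) < θ₁ + θ₂))]

end AuxCompare

/-- Lemma comparing θ with c₂ and c₄: for every
θ ∈ (√λ + (1/2)z_{α/2}σ/√n, √λ + 2z_{α/2}σ/√n), θ > c₂ iff
θ > √λ + z_{α/2}σ̃(θ)/√n, and θ > c₄ iff θ > √λ + z_{α/2}σ/√n + z_{α/2}σ̃(θ)/√n. -/
theorem compare_with_boundary_points (n : ℕ) (hn : 1 ≤ n) (σ lam α τ za zt : ℝ)
    (hσ : 0 < σ) (hlam : 0 < lam)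
    (hα : α ∈ Set.Ioo (0:ℝ) 1) (hτ : τ ∈ Set.Ioo (0:ℝ) 1)
    (hza : Phi (-za) = α / 2) (hzt : Phi (-zt) = τ / 2)
    (hC1 : α ≤ τ) (hC2 : τ < 2 * Phi (-(za / 2)) - α)
    (hlamLB : za * σ / Real.sqrt n < Real.sqrt lam)
    (c₂ c₄ : ℝ) (hc₂pos : 0 < c₂) (hc₄pos : 0 < c₄)
    (hc₂ : c₂ = Real.sqrt lam + za * sigTilde lam σ c₂ / Real.sqrt n)
    (hc₄ : c₄ = Real.sqrt lam + za * σ / Real.sqrt n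
        + za * sigTilde lam σ c₄ / Real.sqrt n) :
    ∀ θ ∈ Set.Ioo (Real.sqrt lam + (1/2) * za * σ / Real.sqrt n)
        (Real.sqrt lam + 2 * za * σ / Real.sqrt n),
      (c₂ < θ ↔ Real.sqrt lam + za * sigTilde lam σ θ / Real.sqrt n < θ) ∧
      (c₄ < θ ↔ Real.sqrt lam + za * σ / Real.sqrt n
          + za * sigTilde lam σ θ / Real.sqrt n < θ) := by
  have hs : (0:ℝ) < Real.sqrt n := Real.sqrt_pos.2 (by exact_mod_cast Nat.lt_of_lt_of_le Nat.zero_lt_one hn)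
  have hza0 : 0 < za := by
    by_contra hle
    push_neg at hle
    have h05 : (1:ℝ)/2 ≤ Phi (-za) := by
      have := Phi_mono' (by linarith : (0:ℝ) ≤ -za)
      rw [Phi_zero'] at this
      exact this
    rw [hza] at h05
    linarith [hα.2]
  have hL : 0 < Real.sqrt lam := Real.sqrt_pos.2 hlam
  have hc₂L : Real.sqrt lam ≤ c₂ := by
    have h0 := sigTilde_nonneg' (σ := σ) (θ := c₂) hσ.le hlam
    have : 0 ≤ za * sigTilde lam σ c₂ / Real.sqrt n :=
      div_nonneg (mul_nonneg hza0.le h0) hs.le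
    linarith [hc₂]
  have hc₄L : Real.sqrt lam ≤ c₄ := by
    have h0 := sigTilde_nonneg' (σ := σ) (θ := c₄) hσ.le hlam
    have h2 : 0 ≤ za * σ / Real.sqrt n := by positivity
    have : 0 ≤ za * sigTilde lam σ c₄ / Real.sqrt n :=
      div_nonneg (mul_nonneg hza0.le h0) hs.le
    linarith [hc₄]
  intro θ hθ
  obtain ⟨hθ1, hθ2⟩ := hθ
  have hθL : Real.sqrt lam < θ := by
    have : 0 < (1/2) * za * σ / Real.sqrt n := by positivity
    linarith
  constructor
  · constructor
    · intro h
      have := sigTilde_diff_lt hσ hlam hza0 hs hlamLB hc₂L h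
      linarith [hc₂]
    · intro h
      by_contra hnot
      push_neg at hnot
      rcases eq_or_lt_of_le hnot with heq | hlt
      · rw [← heq] at hc₂; linarith
      · have := sigTilde_diff_lt hσ hlam hza0 hs hlamLB hθL.le hlt
        linarith [hc₂]
  · constructor
    · intro h
      have := sigTilde_diff_lt hσ hlam hza0 hs hlamLB hc₄L h
      linarith [hc₄]
    · intro h
      by_contra hnot
      push_neg at hnot
      rcases eq_or_lt_of_le hnot with heq | hlt
      · rw [← heq] at hc₄; linarith
      · have := sigTilde_diff_lt hσ hlam hza0 hs hlamLB hθL.le hlt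
        linarith [hc₄]
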